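/- arXiv:1807.04501 — 3 statements merged into one kernel-verified Lean document; each statement's English description precedes it below -/
import Mathlib

section
/- Representation of ω-bounded functionals on a reflexive space: let E be a real reflexive Banach space (the canonical inclusion of E into its double dual is surjective) and let ω be a continuous alternating bilinear form on E which is weakly nondegenerate (ω(u,v) = 0 for all v ∈ E implies u = 0). Let φ : E → ℝ be a linear functional for which there exists C ≥ 0 with |φ(v)| ≤ C·‖ω^♭(v)‖_{E*} for all v ∈ E. Then there exists a unique u ∈ E such that φ(v) = ω(u,v) for all v ∈ E, and moreover ‖u‖ ≤ C. -/
theorem ext_aux {F : Type*} [NormedAddCommGroup F] [NormedSpace ℝ F] (p : Subspace ℝ F)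
    (g : p →ₗ[ℝ] ℝ) (C : ℝ) (hC : 0 ≤ C) (h : ∀ x : p, ‖g x‖ ≤ C * ‖x‖) :
    ∃ Ψ : F →L[ℝ] ℝ, (∀ x : p, Ψ x = g x) ∧ ‖Ψ‖ ≤ C := by
  obtain ⟨Ψ, hΨ, hn⟩ := exists_extension_norm_eq p (g.mkContinuous C h)
  exact ⟨Ψ, fun x => by rw [hΨ]; rfl, hn ▸ LinearMap.mkContinuous_norm_le g hC h⟩

/-- Representation of ω-bounded functionals on a reflexive space.
`E` is a real reflexive Banach space, `ω` a continuous alternating weakly nondegenerate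
bilinear form on `E`, and `φ` a linear functional with `|φ v| ≤ C * ‖ω^♭ v‖` for all `v`
(where `ω^♭ v = ω v ∈ E*`).  Then there is a unique `u ∈ E` with `φ v = ω u v` for all
`v`, and moreover `‖u‖ ≤ C`. -/
theorem exists_unique_rep_of_omega_bounded
    {E : Type*} [NormedAddCommGroup E] [NormedSpace ℝ E] [CompleteSpace E]
    (hrefl : Function.Surjective (NormedSpace.inclusionInDoubleDual ℝ E))
    (ω : E →L[ℝ] E →L[ℝ] ℝ)
    (halt : ∀ u v : E, ω u v = - ω v u)
    (hnd : ∀ u : E, (∀ v : E, ω u v = 0) → u = 0)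
    (φ : E →ₗ[ℝ] ℝ) (C : ℝ) (hC : 0 ≤ C)
    (hφ : ∀ v : E, |φ v| ≤ C * ‖ω v‖) :
    ∃ u : E, (∀ v : E, φ v = ω u v) ∧ ‖u‖ ≤ C ∧
      ∀ u' : E, (∀ v : E, φ v = ω u' v) → u' = u := by
  classical
  -- well-definedness
  have key : ∀ v v' : E, ω v = ω v' → φ v = φ v' := by
    intro v v' h
    have h1 := hφ (v - v')
    have h2 : ω (v - v') = 0 := by simp [map_sub, h]
    rw [h2] at h1
    simp only [norm_zero, mul_zero] at h1
    have := abs_nonneg (φ (v - v'))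
    have h3 : φ (v - v') = 0 := by
      have : |φ (v - v')| = 0 := le_antisymm h1 (abs_nonneg _)
      exact abs_eq_zero.mp this
    have := map_sub φ v v'
    rw [this] at h3
    linarith [h3]
  set S : Submodule ℝ (E →L[ℝ] ℝ) := LinearMap.range (ω : E →ₗ[ℝ] E →L[ℝ] ℝ) with hS
  have memdef : ∀ x : S, ∃ v : E, ω v = (x : E →L[ℝ] ℝ) := fun x => x.2
  have spec : ∀ x : S, ω (memdef x).choose = (x : E →L[ℝ] ℝ) := fun x => (memdef x).choose_spec
  -- linear functional on S
  have gdef : ∃ g : S →ₗ[ℝ] ℝ, ∀ x : S, g x = φ (memdef x).choose := by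
    refine ⟨{ toFun := fun x => φ (memdef x).choose, map_add' := ?_, map_smul' := ?_ }, fun _ => rfl⟩
    · intro x y
      have h1 : ω (memdef (x + y)).choose = ω ((memdef x).choose + (memdef y).choose) := by
        rw [map_add, spec, spec, spec]; rfl
      show φ (memdef (x + y)).choose = φ (memdef x).choose + φ (memdef y).choose
      rw [key _ _ h1, map_add]
    · intro c x
      have h1 : ω (memdef (c • x)).choose = ω (c • (memdef x).choose) := by
        rw [map_smul, spec, spec]; rfl
      show φ (memdef (c • x)).choose = c • φ (memdef x).choose
      rw [key _ _ h1, map_smul]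
  obtain ⟨g, hg⟩ := gdef
  have gbound : ∀ x : S, ‖g x‖ ≤ C * ‖x‖ := by
    intro x
    rw [hg]
    have := hφ (memdef x).choose
    rw [spec x] at this
    simpa [Real.norm_eq_abs] using this
  obtain ⟨Ψ, hΨ, hΨnorm⟩ := ext_aux S g C hC gbound
  obtain ⟨u₀, hu₀⟩ := hrefl Ψ
  have hu₀norm : ‖u₀‖ = ‖Ψ‖ := by
    rw [← hu₀]
    exact (NormedSpace.inclusionInDoubleDualLi ℝ (E := E)).norm_map u₀ |>.symm ▸
      ((NormedSpace.inclusionInDoubleDualLi ℝ (E := E)).norm_map u₀).symm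
  have happ : ∀ v : E, Ψ (ω v) = ω v u₀ := by
    intro v
    rw [← hu₀]
    rfl
  have hrep : ∀ v : E, φ v = ω (-u₀) v := by
    intro v
    have hmem : (ω v : E →L[ℝ] ℝ) ∈ S := ⟨v, rfl⟩
    have h1 : Ψ (ω v) = g ⟨ω v, hmem⟩ := hΨ ⟨ω v, hmem⟩
    have h2 : g ⟨ω v, hmem⟩ = φ (memdef ⟨ω v, hmem⟩).choose := hg _
    have h3 : φ (memdef ⟨ω v, hmem⟩).choose = φ v := key _ _ (spec ⟨ω v, hmem⟩)
    have h4 : φ v = ω v u₀ := by rw [← h3, ← h2, ← h1, happ]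
    rw [h4, halt (-u₀) v]
    simp
  refine ⟨-u₀, hrep, ?_, ?_⟩
  · rw [norm_neg, hu₀norm]; exact hΨnorm
  · intro u' hu'
    have : ∀ v : E, ω (u' - (-u₀)) v = 0 := by
      intro v
      rw [map_sub]
      simp only [ContinuousLinearMap.sub_apply]
      rw [← hu' v, ← hrep v]
      ring
    have := hnd _ this
    exact sub_eq_zero.mp this
end

section
/- Existence and uniqueness of solutions for a direct limit of ODEs: let E be a real vector space, (p_n)_{n∈ℕ} a monotone increasing sequence of subspaces with union E, carrying a coherent sequence of norms whose common extension makes E a normed space N, and assume each subspace p_n is complete for the induced norm. Fix t₀ ∈ ℝ, T > 0, I = [t₀ − T, t₀ + T], n₀ ∈ ℕ and a ∈ p_{n₀}. For n ≥ n₀ let U_n ⊆ p_n be open subsets with U_n ⊆ U_{n+1}, and let f_n : I × U_n → p_n be continuous maps with f_{n+1}|_{I×U_n} = f_n. Assume: (Aₙ) for each n ≥ n₀ there is K_n > 0 such that ‖f_n(t,x)‖ ≤ K_n for all (t,x) ∈ I × U_n and x ↦ f_n(t,x) is Lipschitz with constant K_n on U_n for every t ∈ I; there are radii r_n > 0 with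 the closed ball {x ∈ p_n : ‖x − a‖ ≤ r_n} contained in U_n; (B) inf_{n≥n₀} r_n/K_n > 0, and τ is chosen with 0 < τ < min(inf_n r_n/K_n, T); (C) inf_{n≥n₀} (r_n − τK_n) > 0. Then for every x belonging to some V_m := {y ∈ p_m : ‖y − a‖ < min(r_m − τK_m, r_{n₀} − τK_{n₀})} (m ≥ n₀), there exists a curve γ : [t₀ − τ, t₀ + τ] → E with γ(t₀) = x, taking values in U_m ⊆ p_m, differentiable with derivative γ′(t) = f_m(t, γ(t)) for all t; and γ is unique among curves δ : [t₀ − τ, t₀ + τ] → E with δ(t₀) = x whose image is contained in U_k for some k ≥ n₀ and which satisfy δ′(t) = f_k(t, δ(t)) for all t. -/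
/-- Existence and uniqueness of solutions for a direct limit of ODEs
(Theorem "existsol" of the paper).  `E` is a normed real vector space whose norm is the
common extension of a coherent sequence of norms on a monotone sequence of subspaces
`p n` with union `E`, each `p n` complete for the induced norm.  Given `t₀`, `T > 0`,
`I = [t₀ − T, t₀ + T]`, `n₀`, `a ∈ p n₀`, ascending open sets `U n ⊆ p n` (`n ≥ n₀`),
coherent continuous maps `f n : I × U n → p n`, bounds and Lipschitz constants `K n`
(hypotheses (Aₙ)), radii `r n` with the closed ball of radius `r n` around `a` in `p n`
contained in `U n`, a time `τ` with `0 < τ < min (inf_n (r n / K n), T)` (hypothesis (B))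
and `inf_n (r n − τ K n) > 0` (hypothesis (C)), then for every `x` in some
`V m = {y ∈ p m : ‖y − a‖ < min (r m − τ K m, r n₀ − τ K n₀)}` there is a solution
`γ : [t₀ − τ, t₀ + τ] → U m ⊆ p m` of `γ' = f m (t, γ t)` with `γ t₀ = x`, unique among
solutions with values in some `U k`. -/
theorem direct_limit_ode_existence_uniqueness
    {E : Type*} [NormedAddCommGroup E] [NormedSpace ℝ E]
    (p : ℕ → Submodule ℝ E) (hmono : Monotone p) (hunion : ∀ x : E, ∃ n, x ∈ p n)
    (hcomplete : ∀ n, IsComplete (p n : Set E))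
    (t₀ T : ℝ) (hT : 0 < T) (n₀ : ℕ) (a : E) (ha : a ∈ p n₀)
    (U : ℕ → Set E)
    (hUsub : ∀ n, n₀ ≤ n → U n ⊆ (p n : Set E))
    (hUopen : ∀ n, n₀ ≤ n → ∀ x ∈ U n, ∃ ε > 0, ∀ y ∈ p n, ‖y - x‖ < ε → y ∈ U n)
    (hUmono : ∀ n, n₀ ≤ n → U n ⊆ U (n + 1))
    (f : ℕ → ℝ → E → E)
    (hfmem : ∀ n, n₀ ≤ n → ∀ t ∈ Set.Icc (t₀ - T) (t₀ + T), ∀ x ∈ U n, f n t x ∈ p n)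
    (hfcont : ∀ n, n₀ ≤ n →
      ContinuousOn (fun q : ℝ × E => f n q.1 q.2) (Set.Icc (t₀ - T) (t₀ + T) ×ˢ U n))
    (hfcoh : ∀ n, n₀ ≤ n → ∀ t ∈ Set.Icc (t₀ - T) (t₀ + T), ∀ x ∈ U n,
      f (n + 1) t x = f n t x)
    (K : ℕ → ℝ) (hK : ∀ n, n₀ ≤ n → 0 < K n)
    (hbound : ∀ n, n₀ ≤ n → ∀ t ∈ Set.Icc (t₀ - T) (t₀ + T), ∀ x ∈ U n, ‖f n t x‖ ≤ K n)
    (hlip : ∀ n, n₀ ≤ n → ∀ t ∈ Set.Icc (t₀ - T) (t₀ + T), ∀ x ∈ U n, ∀ y ∈ U n,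
      ‖f n t x - f n t y‖ ≤ K n * ‖x - y‖)
    (r : ℕ → ℝ) (hr : ∀ n, n₀ ≤ n → 0 < r n)
    (hball : ∀ n, n₀ ≤ n → ∀ x ∈ p n, ‖x - a‖ ≤ r n → x ∈ U n)
    (τ : ℝ) (hτpos : 0 < τ) (hτT : τ < T)
    (hB : ∃ c : ℝ, τ < c ∧ ∀ n, n₀ ≤ n → c ≤ r n / K n)
    (hC : ∃ δ : ℝ, 0 < δ ∧ ∀ n, n₀ ≤ n → δ ≤ r n - τ * K n) :
    ∀ m, n₀ ≤ m → ∀ x ∈ p m,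
      ‖x - a‖ < min (r m - τ * K m) (r n₀ - τ * K n₀) →
      ∃ γ : ℝ → E, γ t₀ = x ∧
        (∀ t ∈ Set.Icc (t₀ - τ) (t₀ + τ), γ t ∈ U m) ∧
        (∀ t ∈ Set.Icc (t₀ - τ) (t₀ + τ),
          HasDerivWithinAt γ (f m t (γ t)) (Set.Icc (t₀ - τ) (t₀ + τ)) t) ∧
        ∀ δc : ℝ → E, δc t₀ = x →
          (∃ k, n₀ ≤ k ∧ (∀ t ∈ Set.Icc (t₀ - τ) (t₀ + τ), δc t ∈ U k) ∧
            ∀ t ∈ Set.Icc (t₀ - τ) (t₀ + τ),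
              HasDerivWithinAt δc (f k t (δc t)) (Set.Icc (t₀ - τ) (t₀ + τ)) t) →
          ∀ t ∈ Set.Icc (t₀ - τ) (t₀ + τ), δc t = γ t := by
  classical
  intro m hm x hxp hxa
  have hTT : t₀ - T ≤ t₀ + T := by linarith
  have hττ : t₀ - τ ≤ t₀ + τ := by linarith
  -- the clamp onto the big interval
  set cl : ℝ → ℝ := fun t => max (t₀ - T) (min t (t₀ + T)) with hcldef
  have hclmem : ∀ t, cl t ∈ Set.Icc (t₀ - T) (t₀ + T) := by
    intro t
    constructor
    · exact le_max_left _ _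
    · simp only [cl, max_le_iff]
      exact ⟨hTT, min_le_right _ _⟩
  have hcleq : ∀ t ∈ Set.Icc (t₀ - T) (t₀ + T), cl t = t := by
    intro t ht
    simp only [cl]
    rw [min_eq_left ht.2, max_eq_right ht.1]
  have hclcont : Continuous cl := continuous_const.max (continuous_id.min continuous_const)
  have hsub : Set.Icc (t₀ - τ) (t₀ + τ) ⊆ Set.Icc (t₀ - T) (t₀ + T) :=
    Set.Icc_subset_Icc (by linarith) (by linarith)
  -- chains of inclusions / coherence
  have hUch : ∀ n j, n₀ ≤ n → n ≤ j → U n ⊆ U j := by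
    intro n j hn hnj
    induction j, hnj using Nat.le_induction with
    | base => exact subset_rfl
    | succ j hj ih => exact ih.trans (hUmono j (hn.trans hj))
  have hfch : ∀ n j, n₀ ≤ n → n ≤ j → ∀ t ∈ Set.Icc (t₀ - T) (t₀ + T), ∀ y ∈ U n,
      f j t y = f n t y := by
    intro n j hn hnj
    induction j, hnj using Nat.le_induction with
    | base => intro t _ y _; rfl
    | succ j hj ih =>
      intro t ht y hy
      rw [hfcoh j (hn.trans hj) t ht y (hUch n j hn hj hy), ih t ht y hy]
  have hKm := hK m hm
  have hxa' : ‖x - a‖ < r m - τ * K m := lt_of_lt_of_le hxa (min_le_left _ _)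
  have hxU : x ∈ U m := hball m hm x hxp (by nlinarith)
  -- work inside the complete space `p m`
  haveI : CompleteSpace (p m) := (hcomplete m).completeSpace_coe
  set x' : p m := ⟨x, hxp⟩ with hx'def
  set R : ℝ := r m - ‖x - a‖ with hRdef
  have hτKR : τ * K m ≤ R := by simp only [R]; linarith
  have hR0 : (0:ℝ) ≤ R := le_trans (by positivity) hτKR
  have hballU : ∀ y : E, y ∈ p m → ‖y - x‖ ≤ R → y ∈ U m := by
    intro y hyp hyx
    refine hball m hm y hyp ?_
    calc ‖y - a‖ = ‖(y - x) + (x - a)‖ := by rw [sub_add_sub_cancel]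
      _ ≤ ‖y - x‖ + ‖x - a‖ := norm_add_le _ _
      _ ≤ R + ‖x - a‖ := by linarith
      _ = r m := by simp [R]
  -- the globally defined vector field on `p m`
  set v : ℝ → p m → p m := fun t y =>
    if h : (y : E) ∈ U m then ⟨f m (cl t) y, hfmem m hm _ (hclmem t) _ h⟩ else 0 with hvdef
  have hvU : ∀ t (y : p m), (y : E) ∈ U m → (v t y : E) = f m (cl t) y := by
    intro t y hy; simp only [v, dif_pos hy]
  have hvnorm : ∀ t (y : p m), ‖v t y‖ ≤ K m := by
    intro t y
    by_cases hy : (y : E) ∈ U m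
    · have : ‖(v t y : E)‖ ≤ K m := by
        rw [hvU t y hy]; exact hbound m hm _ (hclmem t) _ hy
      simpa using this
    · simp only [v, dif_neg hy]
      simpa using hKm.le
  have hcball : ∀ y : p m, y ∈ Metric.closedBall x' R → (y : E) ∈ U m := by
    intro y hy
    refine hballU y y.2 ?_
    have : dist y x' ≤ R := Metric.mem_closedBall.mp hy
    rwa [Subtype.dist_eq, dist_eq_norm] at this
  -- Picard–Lindelöf hypotheses
  have hpl : IsPicardLindelof v (tmin := t₀ - τ) (tmax := t₀ + τ) ⟨t₀, ⟨by linarith, by linarith⟩⟩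
      x' (Real.toNNReal R) 0 (Real.toNNReal (K m)) (Real.toNNReal (K m)) := by
    have hRc : ((Real.toNNReal R : NNReal) : ℝ) = R := Real.coe_toNNReal _ hR0
    constructor
    · intro t _
      refine LipschitzOnWith.of_dist_le_mul ?_
      intro y hy z hz
      rw [hRc] at hy hz
      have hyU := hcball y hy
      have hzU := hcball z hz
      rw [Subtype.dist_eq, Subtype.dist_eq, dist_eq_norm, dist_eq_norm,
        hvU t y hyU, hvU t z hzU, Real.coe_toNNReal _ hKm.le]
      exact hlip m hm _ (hclmem t) _ hyU _ hzU
    · intro y hy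
      rw [hRc] at hy
      have hyU := hcball y hy
      have h1 : ContinuousOn (fun t : ℝ => f m (cl t) (y : E)) (Set.Icc (t₀ - τ) (t₀ + τ)) := by
        have hmap : Set.MapsTo (fun t : ℝ => ((cl t, (y : E)) : ℝ × E))
            (Set.Icc (t₀ - τ) (t₀ + τ)) (Set.Icc (t₀ - T) (t₀ + T) ×ˢ U m) := by
          intro t _
          exact ⟨hclmem t, hyU⟩
        exact (hfcont m hm).comp ((hclcont.prodMk continuous_const).continuousOn) hmap
      rw [Topology.IsEmbedding.subtypeVal.continuousOn_iff]
      refine h1.congr ?_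
      intro t _
      simp only [Function.comp_apply, hvU t y hyU]
    · intro t _ y _
      rw [Real.coe_toNNReal _ hKm.le]
      exact hvnorm t y
    · show ((Real.toNNReal (K m) : NNReal) : ℝ) * max (t₀ + τ - t₀) (t₀ - (t₀ - τ)) ≤
        ((Real.toNNReal R : NNReal) : ℝ) - ((0 : NNReal) : ℝ)
      rw [hRc, Real.coe_toNNReal _ hKm.le, NNReal.coe_zero, sub_zero]
      have hmax : max (t₀ + τ - t₀) (t₀ - (t₀ - τ)) ≤ τ := max_le (by linarith) (by linarith)
      calc K m * max (t₀ + τ - t₀) (t₀ - (t₀ - τ)) ≤ K m * τ :=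
            mul_le_mul_of_nonneg_left hmax hKm.le
        _ = τ * K m := mul_comm _ _
        _ ≤ R := hτKR
  obtain ⟨g, hg0, hgd⟩ := hpl.exists_eq_forall_mem_Icc_hasDerivWithinAt₀
  replace hg0 : g t₀ = x' := hg0
  have ht₀mem : t₀ ∈ Set.Icc (t₀ - τ) (t₀ + τ) := ⟨by linarith, by linarith⟩
  -- the solution stays in the ball, hence in `U m`
  have hgball : ∀ t ∈ Set.Icc (t₀ - τ) (t₀ + τ), ‖(g t : E) - x‖ ≤ τ * K m := by
    intro t ht
    have hmv : ‖g t - g t₀‖ ≤ K m * ‖t - t₀‖ :=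
      (convex_Icc _ _).norm_image_sub_le_of_norm_hasDerivWithin_le
        (fun s hs => hgd s hs) (fun s _ => hvnorm s (g s)) ht₀mem ht
    have habs : ‖t - t₀‖ ≤ τ := by
      rw [Real.norm_eq_abs, abs_le]
      constructor <;> [linarith [ht.1]; linarith [ht.2]]
    have h1 : ‖(g t : E) - x‖ = ‖g t - g t₀‖ := by
      rw [hg0]
      rfl
    rw [h1]
    calc ‖g t - g t₀‖ ≤ K m * ‖t - t₀‖ := hmv
      _ ≤ K m * τ := by nlinarith
      _ = τ * K m := mul_comm _ _
  have hgU : ∀ t ∈ Set.Icc (t₀ - τ) (t₀ + τ), (g t : E) ∈ U m := by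
    intro t ht
    exact hballU _ (g t).2 (le_trans (hgball t ht) hτKR)
  -- the solution in `E`
  refine ⟨fun t => (g t : E), by show ((g t₀ : E)) = x; rw [hg0], hgU, ?_, ?_⟩
  · -- derivative
    intro t ht
    have hd := hgd t ht
    have := ((p m).subtypeL.hasFDerivAt (x := g t)).comp_hasDerivWithinAt t hd
    have hveq : ((p m).subtypeL (v t (g t)) : E) = f m t ((g t : E)) := by
      have h1 : ((p m).subtypeL (v t (g t)) : E) = (v t (g t) : E) := rfl
      rw [h1, hvU t (g t) (hgU t ht), hcleq t (hsub ht)]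
    rwa [hveq] at this
  · -- uniqueness
    intro δc hδ0 ⟨k, hk, hδU, hδd⟩ t ht
    set j := max m k with hjdef
    have hmj : m ≤ j := le_max_left _ _
    have hkj : k ≤ j := le_max_right _ _
    have hj : n₀ ≤ j := le_trans hm hmj
    set w : ℝ → E → E := fun t y => f j (cl t) y with hwdef
    have hw : ∀ s : ℝ, LipschitzOnWith (Real.toNNReal (K j)) (w s) (U j) := by
      intro s
      refine LipschitzOnWith.of_dist_le_mul ?_
      intro y hy z hz
      rw [dist_eq_norm, dist_eq_norm, Real.coe_toNNReal _ (hK j hj).le]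
      exact hlip j hj _ (hclmem s) _ hy _ hz
    -- both curves solve w on the small interval
    have hγw : ∀ s ∈ Set.Icc (t₀ - τ) (t₀ + τ),
        HasDerivWithinAt (fun u => (g u : E)) (w s ((g s : E)))
          (Set.Icc (t₀ - τ) (t₀ + τ)) s := by
      intro s hs
      have hd := hgd s hs
      have := ((p m).subtypeL.hasFDerivAt (x := g s)).comp_hasDerivWithinAt s hd
      have hveq : ((p m).subtypeL (v s (g s)) : E) = w s ((g s : E)) := by
        have h1 : ((p m).subtypeL (v s (g s)) : E) = (v s (g s) : E) := rfl
        rw [h1, hvU s (g s) (hgU s hs)]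
        show f m (cl s) ((g s : E)) = f j (cl s) ((g s : E))
        exact (hfch m j hm hmj _ (hclmem s) _ (hgU s hs)).symm
      rwa [hveq] at this
    have hδw : ∀ s ∈ Set.Icc (t₀ - τ) (t₀ + τ),
        HasDerivWithinAt δc (w s (δc s)) (Set.Icc (t₀ - τ) (t₀ + τ)) s := by
      intro s hs
      have hd := hδd s hs
      have hveq : w s (δc s) = f k s (δc s) := by
        show f j (cl s) (δc s) = f k s (δc s)
        rw [hfch k j hk hkj (cl s) (hclmem s) (δc s) (hδU s hs), hcleq s (hsub hs)]
      rwa [hveq]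
    have hγUj : ∀ s ∈ Set.Icc (t₀ - τ) (t₀ + τ), (g s : E) ∈ U j :=
      fun s hs => hUch m j hm hmj (hgU s hs)
    have hδUj : ∀ s ∈ Set.Icc (t₀ - τ) (t₀ + τ), δc s ∈ U j :=
      fun s hs => hUch k j hk hkj (hδU s hs)
    have hγcont : ContinuousOn (fun u => (g u : E)) (Set.Icc (t₀ - τ) (t₀ + τ)) :=
      fun s hs => (hγw s hs).continuousWithinAt
    have hδcont : ContinuousOn δc (Set.Icc (t₀ - τ) (t₀ + τ)) :=
      fun s hs => (hδw s hs).continuousWithinAt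
    have heq0 : δc t₀ = (g t₀ : E) := by rw [hδ0, hg0]
    -- right half
    have hright : Set.EqOn δc (fun u => (g u : E)) (Set.Icc t₀ (t₀ + τ)) := by
      have hsubr : Set.Icc t₀ (t₀ + τ) ⊆ Set.Icc (t₀ - τ) (t₀ + τ) :=
        Set.Icc_subset_Icc (by linarith) le_rfl
      refine ODE_solution_unique_of_mem_Icc_right (v := w)
        (s := fun _ => U j) (fun s _ => hw s) (hδcont.mono hsubr) ?_
        (fun s hs => hδUj s (hsubr (Set.Ico_subset_Icc_self hs)))
        (hγcont.mono hsubr) ?_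
        (fun s hs => hγUj s (hsubr (Set.Ico_subset_Icc_self hs))) heq0
      · intro s hs
        exact ((hδw s (hsubr (Set.Ico_subset_Icc_self hs))).mono
          (Set.Icc_subset_Icc (by linarith [hs.1]) le_rfl)).mono_of_mem_nhdsWithin
            (Icc_mem_nhdsGE_of_mem ⟨le_rfl, hs.2⟩)
      · intro s hs
        exact ((hγw s (hsubr (Set.Ico_subset_Icc_self hs))).mono
          (Set.Icc_subset_Icc (by linarith [hs.1]) le_rfl)).mono_of_mem_nhdsWithin
            (Icc_mem_nhdsGE_of_mem ⟨le_rfl, hs.2⟩)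
    -- left half
    have hleft : Set.EqOn δc (fun u => (g u : E)) (Set.Icc (t₀ - τ) t₀) := by
      have hsubl : Set.Icc (t₀ - τ) t₀ ⊆ Set.Icc (t₀ - τ) (t₀ + τ) :=
        Set.Icc_subset_Icc le_rfl (by linarith)
      refine ODE_solution_unique_of_mem_Icc_left (v := w)
        (s := fun _ => U j) (fun s _ => hw s) (hδcont.mono hsubl) ?_
        (fun s hs => hδUj s (hsubl (Set.Ioc_subset_Icc_self hs)))
        (hγcont.mono hsubl) ?_
        (fun s hs => hγUj s (hsubl (Set.Ioc_subset_Icc_self hs))) heq0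
      · intro s hs
        exact ((hδw s (hsubl (Set.Ioc_subset_Icc_self hs))).mono
          (Set.Icc_subset_Icc le_rfl (by linarith [hs.2]))).mono_of_mem_nhdsWithin
            (Icc_mem_nhdsLE_of_mem ⟨hs.1, le_rfl⟩)
      · intro s hs
        exact ((hγw s (hsubl (Set.Ioc_subset_Icc_self hs))).mono
          (Set.Icc_subset_Icc le_rfl (by linarith [hs.2]))).mono_of_mem_nhdsWithin
            (Icc_mem_nhdsLE_of_mem ⟨hs.1, le_rfl⟩)
    rcases le_total t t₀ with h | h
    · exact hleft ⟨ht.1, h⟩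
    · exact hright ⟨h, ht.2⟩
end

section
/- The loop-space pairing on L^p is a weakly nondegenerate form for p ≥ 2: let d ∈ ℕ, let ω₀ be a nondegenerate alternating bilinear form on ℝ^d, let S¹ denote the additive circle ℝ/ℤ with its Haar (Lebesgue) probability measure, let 2 ≤ p < ∞ and H = L^p(S¹, ℝ^d). Then for all X, Y ∈ H the function t ↦ ω₀(X(t), Y(t)) is integrable, Ω(X,Y) := ∫_{S¹} ω₀(X(t), Y(t)) dt defines a continuous bilinear form on H (with |Ω(X,Y)| ≤ C‖X‖_p‖Y‖_p for some constant C depending only on ω₀), Ω is alternating, and Ω is weakly nondegenerate: if X ∈ H satisfies Ω(X,Y) = 0 for all Y ∈ H, then X = 0. -/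
open MeasureTheory ENNReal

/-- The loop-space pairing `Ω(X,Y) = ∫_{S¹} ω₀(X t, Y t) dt` on `L^p(S¹, ℝ^d)`,
where `S¹ = ℝ/ℤ` carries its Haar (Lebesgue) probability measure. -/
noncomputable def loopPairingLp (d : ℕ) (q : ℝ≥0∞)
    (ω₀ : EuclideanSpace ℝ (Fin d) →ₗ[ℝ] EuclideanSpace ℝ (Fin d) →ₗ[ℝ] ℝ)
    (X Y : Lp (EuclideanSpace ℝ (Fin d)) q (volume : Measure (AddCircle (1:ℝ)))) : ℝ :=
  ∫ t, ω₀ (X t) (Y t)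

/-- The loop-space pairing on `L^p` is a weakly nondegenerate form for
`2 ≤ p < ∞`.  For a nondegenerate alternating bilinear form `ω₀` on `ℝ^d` and
`H = L^p(S¹, ℝ^d)` with `2 ≤ p < ∞`, the integrand `t ↦ ω₀(X t, Y t)` is integrable for
all `X, Y ∈ H`, `Ω(X,Y) = ∫ ω₀(X t, Y t) dt` is bilinear and continuous
(`|Ω(X,Y)| ≤ C‖X‖_p‖Y‖_p` for some `C` depending only on `ω₀`), alternating, and weakly
nondegenerate: `Ω(X,Y) = 0` for all `Y` implies `X = 0`. -/
theorem loopPairingLp_weakly_nondegenerate (d : ℕ) (q : ℝ≥0∞) [Fact (1 ≤ q)]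
    (hq2 : 2 ≤ q) (hqtop : q ≠ ⊤)
    (ω₀ : EuclideanSpace ℝ (Fin d) →ₗ[ℝ] EuclideanSpace ℝ (Fin d) →ₗ[ℝ] ℝ)
    (halt : ∀ u v : EuclideanSpace ℝ (Fin d), ω₀ u v = - ω₀ v u)
    (hnd : ∀ u : EuclideanSpace ℝ (Fin d), (∀ v, ω₀ u v = 0) → u = 0) :
    (∀ X Y : Lp (EuclideanSpace ℝ (Fin d)) q (volume : Measure (AddCircle (1:ℝ))),
      Integrable (fun t => ω₀ (X t) (Y t))
        (volume : Measure (AddCircle (1:ℝ)))) ∧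
    (∀ X X' Y : Lp (EuclideanSpace ℝ (Fin d)) q (volume : Measure (AddCircle (1:ℝ))),
      loopPairingLp d q ω₀ (X + X') Y
        = loopPairingLp d q ω₀ X Y + loopPairingLp d q ω₀ X' Y) ∧
    (∀ (c : ℝ) (X Y : Lp (EuclideanSpace ℝ (Fin d)) q (volume : Measure (AddCircle (1:ℝ)))),
      loopPairingLp d q ω₀ (c • X) Y = c * loopPairingLp d q ω₀ X Y) ∧
    (∀ X Y Y' : Lp (EuclideanSpace ℝ (Fin d)) q (volume : Measure (AddCircle (1:ℝ))),
      loopPairingLp d q ω₀ X (Y + Y')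
        = loopPairingLp d q ω₀ X Y + loopPairingLp d q ω₀ X Y') ∧
    (∀ (c : ℝ) (X Y : Lp (EuclideanSpace ℝ (Fin d)) q (volume : Measure (AddCircle (1:ℝ)))),
      loopPairingLp d q ω₀ X (c • Y) = c * loopPairingLp d q ω₀ X Y) ∧
    (∀ X Y : Lp (EuclideanSpace ℝ (Fin d)) q (volume : Measure (AddCircle (1:ℝ))),
      loopPairingLp d q ω₀ X Y = - loopPairingLp d q ω₀ Y X) ∧
    (∃ C : ℝ, ∀ X Y : Lp (EuclideanSpace ℝ (Fin d)) q (volume : Measure (AddCircle (1:ℝ))),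
      |loopPairingLp d q ω₀ X Y| ≤ C * ‖X‖ * ‖Y‖) ∧
    (∀ X : Lp (EuclideanSpace ℝ (Fin d)) q (volume : Measure (AddCircle (1:ℝ))),
      (∀ Y, loopPairingLp d q ω₀ X Y = 0) → X = 0) := by
  classical
  haveI : Fact ((0:ℝ) < 1) := ⟨one_pos⟩
  set μ := (volume : Measure (AddCircle (1:ℝ))) with hμdef
  haveI hprob : IsProbabilityMeasure μ := ⟨by simp [hμdef, AddCircle.measure_univ]⟩
  set E := EuclideanSpace ℝ (Fin d) with hEdef
  -- continuous bilinear version of ω₀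
  let M : E →ₗ[ℝ] (E →L[ℝ] ℝ) :=
    { toFun := fun u => LinearMap.toContinuousLinearMap (ω₀ u)
      map_add' := by intro u v; ext w; simp
      map_smul' := by intro c u; ext w; simp }
  let B : E →L[ℝ] (E →L[ℝ] ℝ) := LinearMap.toContinuousLinearMap M
  have hBapp : ∀ u v : E, B u v = ω₀ u v := fun u v => rfl
  have hBbound : ∀ u v : E, |ω₀ u v| ≤ ‖B‖ * (‖u‖ * ‖v‖) := by
    intro u v
    have h1 : |ω₀ u v| = ‖B u v‖ := rfl
    rw [h1, ← mul_assoc]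
    calc ‖B u v‖ ≤ ‖B u‖ * ‖v‖ := (B u).le_opNorm v
      _ ≤ ‖B‖ * ‖u‖ * ‖v‖ := by gcongr; exact B.le_opNorm u
  have haesm : ∀ X Y : Lp E q μ,
      AEStronglyMeasurable (fun t => ω₀ (X t) (Y t)) μ := by
    intro X Y
    have hc : Continuous (fun p : E × E => B p.1 p.2) := B.continuous₂
    exact hc.comp_aestronglyMeasurable
      ((Lp.aestronglyMeasurable X).prodMk (Lp.aestronglyMeasurable Y))
  have hmem2 : ∀ X : Lp E q μ, MemLp (X : _ → E) 2 μ :=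
    fun X => (Lp.memLp X).mono_exponent hq2
  -- the pointwise product of norms is integrable, with Cauchy-Schwarz bound
  have hmul : ∀ X Y : Lp E q μ,
      Integrable (fun t => ‖X t‖ * ‖Y t‖) μ ∧
      ∫ t, ‖X t‖ * ‖Y t‖ ∂μ ≤ ‖X‖ * ‖Y‖ := by
    intro X Y
    have hnX : MemLp (fun t => ‖X t‖) 2 μ := (hmem2 X).norm
    have hnY : MemLp (fun t => ‖Y t‖) 2 μ := (hmem2 Y).norm
    set fX : Lp ℝ 2 μ := hnX.toLp _ with hfXdef
    set fY : Lp ℝ 2 μ := hnY.toLp _ with hfYdef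
    have hfX : fX =ᵐ[μ] fun t => ‖X t‖ := MemLp.coeFn_toLp _
    have hfY : fY =ᵐ[μ] fun t => ‖Y t‖ := MemLp.coeFn_toLp _
    have hintinner : Integrable (fun t => (fX t) * (fY t)) μ := by
      have := MeasureTheory.L2.integrable_inner (𝕜 := ℝ) fX fY
      simpa [RCLike.inner_apply, starRingEnd_apply, mul_comm] using this
    have hint : Integrable (fun t => ‖X t‖ * ‖Y t‖) μ := by
      refine (integrable_congr ?_).mp hintinner
      filter_upwards [hfX, hfY] with t h1 h2
      rw [h1, h2]
    refine ⟨hint, ?_⟩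
    have hinner : (inner ℝ fX fY : ℝ) = ∫ t, (fX t) * (fY t) ∂μ := by
      rw [MeasureTheory.L2.inner_def]
      congr 1
      funext t
      simp [RCLike.inner_apply, starRingEnd_apply, mul_comm]
    have hIeq : ∫ t, ‖X t‖ * ‖Y t‖ ∂μ = (inner ℝ fX fY : ℝ) := by
      rw [hinner]
      refine integral_congr_ae ?_
      filter_upwards [hfX, hfY] with t h1 h2
      rw [h1, h2]
    have hCS : (inner ℝ fX fY : ℝ) ≤ ‖fX‖ * ‖fY‖ := real_inner_le_norm fX fY
    have hfXnorm : ‖fX‖ ≤ ‖X‖ := by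
      rw [Lp.norm_toLp, Lp.norm_def]
      refine ENNReal.toReal_mono (Lp.eLpNorm_ne_top X) ?_
      rw [eLpNorm_norm]
      exact eLpNorm_le_eLpNorm_of_exponent_le hq2 (Lp.aestronglyMeasurable X)
    have hfYnorm : ‖fY‖ ≤ ‖Y‖ := by
      rw [Lp.norm_toLp, Lp.norm_def]
      refine ENNReal.toReal_mono (Lp.eLpNorm_ne_top Y) ?_
      rw [eLpNorm_norm]
      exact eLpNorm_le_eLpNorm_of_exponent_le hq2 (Lp.aestronglyMeasurable Y)
    calc ∫ t, ‖X t‖ * ‖Y t‖ ∂μ = (inner ℝ fX fY : ℝ) := hIeq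
      _ ≤ ‖fX‖ * ‖fY‖ := hCS
      _ ≤ ‖X‖ * ‖Y‖ :=
          mul_le_mul hfXnorm hfYnorm (norm_nonneg _) (norm_nonneg _)
  -- integrability of the main integrand
  have hint : ∀ X Y : Lp E q μ, Integrable (fun t => ω₀ (X t) (Y t)) μ := by
    intro X Y
    refine ((hmul X Y).1.const_mul ‖B‖).mono' (haesm X Y) ?_
    refine Filter.Eventually.of_forall fun t => ?_
    rw [Real.norm_eq_abs]
    exact hBbound _ _
  refine ⟨hint, ?_, ?_, ?_, ?_, ?_, ?_, ?_⟩
  · -- additivity in first variable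
    intro X X' Y
    unfold loopPairingLp
    rw [← integral_add (hint X Y) (hint X' Y)]
    refine integral_congr_ae ?_
    filter_upwards [Lp.coeFn_add X X'] with t ht
    rw [ht]
    simp
  · -- homogeneity in first variable
    intro c X Y
    unfold loopPairingLp
    rw [← smul_eq_mul, ← integral_smul]
    refine integral_congr_ae ?_
    filter_upwards [Lp.coeFn_smul c X] with t ht
    rw [ht]
    simp
  · -- additivity in second variable
    intro X Y Y'
    unfold loopPairingLp
    rw [← integral_add (hint X Y) (hint X Y')]
    refine integral_congr_ae ?_
    filter_upwards [Lp.coeFn_add Y Y'] with t ht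
    rw [ht]
    simp
  · -- homogeneity in second variable
    intro c X Y
    unfold loopPairingLp
    rw [← smul_eq_mul, ← integral_smul]
    refine integral_congr_ae ?_
    filter_upwards [Lp.coeFn_smul c Y] with t ht
    rw [ht]
    simp
  · -- alternating
    intro X Y
    unfold loopPairingLp
    rw [← integral_neg]
    refine integral_congr_ae (Filter.Eventually.of_forall fun t => ?_)
    exact halt _ _
  · -- boundedness
    refine ⟨‖B‖, fun X Y => ?_⟩
    unfold loopPairingLp
    have h1 : |∫ t, ω₀ (X t) (Y t) ∂μ| ≤ ∫ t, ‖B‖ * (‖X t‖ * ‖Y t‖) ∂μ := by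
      have h2 : |∫ t, ω₀ (X t) (Y t) ∂μ| ≤ ∫ t, |ω₀ (X t) (Y t)| ∂μ := by
        simpa [Real.norm_eq_abs] using
          norm_integral_le_integral_norm (μ := μ) (fun t => ω₀ (X t) (Y t))
      exact h2.trans
        (integral_mono (hint X Y).abs ((hmul X Y).1.const_mul ‖B‖) fun t => hBbound _ _)
    calc |∫ t, ω₀ (X t) (Y t) ∂μ| ≤ ∫ t, ‖B‖ * (‖X t‖ * ‖Y t‖) ∂μ := h1
      _ = ‖B‖ * ∫ t, ‖X t‖ * ‖Y t‖ ∂μ := integral_const_mul _ _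
      _ ≤ ‖B‖ * (‖X‖ * ‖Y‖) := by
          exact mul_le_mul_of_nonneg_left (hmul X Y).2 (norm_nonneg B)
      _ = ‖B‖ * ‖X‖ * ‖Y‖ := by ring
  · -- weak nondegeneracy
    intro X hX
    have hXint : Integrable (X : _ → E) μ := by
      have h1 : MemLp (X : _ → E) 1 μ :=
        (Lp.memLp X).mono_exponent (le_trans one_le_two hq2)
      exact memLp_one_iff_integrable.mp h1
    have key : ∀ v : E, ∀ᵐ t ∂μ, ω₀ (X t) v = 0 := by
      intro v
      have hint1 : Integrable (fun t => ω₀ (X t) v) μ := by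
        have := (B.flip v).integrable_comp hXint
        simpa [hBapp] using this
      refine hint1.ae_eq_zero_of_forall_setIntegral_eq_zero ?_
      intro s hs hμs
      set Y : Lp E q μ := indicatorConstLp q hs hμs.ne v with hYdef
      have hYe : (Y : _ → E) =ᵐ[μ] s.indicator fun _ => v := indicatorConstLp_coeFn
      have hcongr : (fun t => ω₀ (X t) (Y t)) =ᵐ[μ]
          s.indicator (fun t => ω₀ (X t) v) := by
        filter_upwards [hYe] with t ht
        by_cases hts : t ∈ s
        · rw [ht, Set.indicator_of_mem hts, Set.indicator_of_mem hts]
        · rw [ht, Set.indicator_of_notMem hts, Set.indicator_of_notMem hts]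
          simp
      have h0 : ∫ t, ω₀ (X t) (Y t) ∂μ = 0 := hX Y
      rw [← integral_indicator hs, ← integral_congr_ae hcongr]
      exact h0
    let b := Pi.basisFun ℝ (Fin d)
    have hall : ∀ᵐ t ∂μ, ∀ i : Fin d, ω₀ (X t) (WithLp.toLp 2 (b i : Fin d → ℝ) : E) = 0 :=
      ae_all_iff.mpr fun i => key _
    have hzero : (X : _ → E) =ᵐ[μ] 0 := by
      filter_upwards [hall] with t ht
      refine hnd (X t) fun v => ?_
      have hv : v = ∑ i : Fin d, v i • (WithLp.toLp 2 (b i : Fin d → ℝ) : E) := by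
        ext j
        simp [b, Pi.basisFun_apply, Pi.single_apply]
      rw [hv, map_sum]
      simp only [_root_.map_smul]
      simp [ht]
    exact Lp.eq_zero_iff_ae_eq_zero.mpr hzero
end
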